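/- Let G be a group, σ, τ : G → G group endomorphisms, a ∈ G a (σ,τ)-central element, and φ : G → (ℂ, +) a group homomorphism. Then the ℂ-linear map D : ℂ[G] → ℂ[G] determined on basis elements by D(g) = φ(g)·(σ(g)·a) (the scalar φ(g) times the basis element of σ(g)·a) is a (σ,τ)-derivation. -/

import Mathlib

/-- Extension of a group endomorphism to a ℂ-algebra endomorphism of `ℂ[G]`. -/
noncomputable def algExt {G : Type*} [Group G] (σ : G →* G) :
    MonoidAlgebra ℂ G →ₐ[ℂ] MonoidAlgebra ℂ G :=
  MonoidAlgebra.mapDomainAlgHom ℂ ℂ σ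

lemma algExt_of {G : Type*} [Group G] (σ : G →* G) (h : G) :
    algExt σ (MonoidAlgebra.of ℂ G h) = MonoidAlgebra.of ℂ G (σ h) := by
  simp [algExt, MonoidAlgebra.of_apply, Finsupp.mapDomain_single]

/-- for a `(σ,τ)`-central element `a ∈ G` and an additive character
`φ : G → (ℂ,+)`, the ℂ-linear map determined on basis elements by
`D(g) = φ(g)·(σ(g)·a)` is a `(σ,τ)`-derivation. -/
theorem central_map_is_sigma_tau_derivation
    {G : Type*} [Group G] (σ τ : G →* G) (a : G)
    (ha : ∀ v : G, a * τ v = σ v * a)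
    (φ : G → ℂ) (hφ : ∀ x y : G, φ (x * y) = φ x + φ y)
    (D : MonoidAlgebra ℂ G →ₗ[ℂ] MonoidAlgebra ℂ G)
    (hDbasis : ∀ g : G, D (MonoidAlgebra.of ℂ G g)
        = φ g • MonoidAlgebra.of ℂ G (σ g * a)) :
    ∀ x y : MonoidAlgebra ℂ G, D (x * y) = D x * algExt τ y + algExt σ x * D y := by
  intro x y
  induction x using MonoidAlgebra.induction_on with
  | of g =>
    induction y using MonoidAlgebra.induction_on with
    | of h =>
      rw [← map_mul (MonoidAlgebra.of ℂ G), hDbasis, hDbasis, hDbasis,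
        algExt_of, algExt_of, hφ, add_smul, smul_mul_assoc, mul_smul_comm,
        ← map_mul (MonoidAlgebra.of ℂ G), ← map_mul (MonoidAlgebra.of ℂ G)]
      congr 2
      · rw [map_mul σ, mul_assoc, ← ha h, ← mul_assoc]
      · rw [map_mul σ, mul_assoc]
    | add f g hf hg =>
      simp only [mul_add, map_add, hf, hg]
      abel
    | smul r f hf =>
      simp only [mul_smul_comm, map_smul, smul_mul_assoc, hf, smul_add]
  | add f g hf hg =>
    simp only [add_mul, map_add, hf, hg]
    abel
  | smul r f hf =>
    simp only [smul_mul_assoc, map_smul, mul_smul_comm, hf, smul_add]
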